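/- arXiv:2002.03689 — 6 statements merged into one kernel-verified Lean document; each statement's English description precedes it below -/
import Mathlib

section
/- For every f ∈ H_X and g ∈ H_Y, P-almost surely: ⟨f ⊗ g, μ_{P_{XY|Z}} − μ_{P_{X|Z}} ⊗ μ_{P_{Y|Z}}⟩_H = E[⟨f, φ_X(X)⟩·⟨g, φ_Y(Y)⟩ | σ(Z)] − E[⟨f, φ_X(X)⟩ | σ(Z)]·E[⟨g, φ_Y(Y)⟩ | σ(Z)], i.e. it equals the conditional covariance Cov(f(X), g(Y) | Z). Here μ_{P_{XY|Z}} := E[φ_X(X) ⊗ φ_Y(Y) | σ(Z)], μ_{P_{X|Z}} := E[φ_X(X) | σ(Z)] and μ_{P_{Y|Z}} := E[φ_Y(Y) | σ(Z)] are Bochner conditional expectations. (Claim derived from Lemmas 3.2 and 3.3 in Section 3.) -/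
open MeasureTheory
open scoped RealInnerProductSpace

/-- Conditional expectation commutes with continuous linear maps. -/
lemma condexp_clm_comm {Ω : Type*} {m mΩ : MeasurableSpace Ω} (hm : m ≤ mΩ)
    (P : Measure Ω) [IsFiniteMeasure P]
    {E F : Type*} [NormedAddCommGroup E] [NormedSpace ℝ E] [CompleteSpace E]
    [NormedAddCommGroup F] [NormedSpace ℝ F] [CompleteSpace F]
    (T : E →L[ℝ] F) {f : Ω → E} (hf : Integrable f P) :
    (fun ω => T ((P[f|m]) ω)) =ᵐ[P] P[fun ω => T (f ω)|m] := by
  haveI : SigmaFinite (P.trim hm) := by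
    haveI := isFiniteMeasure_trim (μ := P) hm
    infer_instance
  refine ae_eq_condExp_of_forall_setIntegral_eq hm (T.integrable_comp hf)
    (fun s _ _ => (T.integrable_comp integrable_condExp).integrableOn)
    (fun s hs hμs => ?_) ?_
  · rw [T.integral_comp_comm integrable_condExp.integrableOn,
      setIntegral_condExp hm hf hs, ← T.integral_comp_comm hf.integrableOn]
  · exact ⟨fun ω => T ((P[f|m]) ω),
      T.continuous.comp_stronglyMeasurable stronglyMeasurable_condExp,
      Filter.EventuallyEq.rfl⟩

/-- (Section 3, from Lemmas 3.2 and 3.3.) For every `f ∈ H_X` and `g ∈ H_Y`, `P`-a.s.,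
`⟨f ⊗ g, μ_{P_{XY|Z}} − μ_{P_{X|Z}} ⊗ μ_{P_{Y|Z}}⟩` equals the conditional covariance
`E[⟨f,φ_X(X)⟩⟨g,φ_Y(Y)⟩ | σ(Z)] − E[⟨f,φ_X(X)⟩ | σ(Z)] · E[⟨g,φ_Y(Y)⟩ | σ(Z)]`. -/
theorem conditional_cross_covariance
    {Ω : Type*} [mΩ : MeasurableSpace Ω] (P : Measure Ω) [IsProbabilityMeasure P]
    {𝒳 : Type*} [MeasurableSpace 𝒳] {𝒴 : Type*} [MeasurableSpace 𝒴]
    {𝒵 : Type*} [m𝒵 : MeasurableSpace 𝒵]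
    (X : Ω → 𝒳) (Y : Ω → 𝒴) (Z : Ω → 𝒵)
    (hX : Measurable X) (hY : Measurable Y) (hZ : Measurable Z)
    {HX : Type*} [NormedAddCommGroup HX] [InnerProductSpace ℝ HX] [CompleteSpace HX]
    [SecondCountableTopology HX] [MeasurableSpace HX] [BorelSpace HX]
    {HY : Type*} [NormedAddCommGroup HY] [InnerProductSpace ℝ HY] [CompleteSpace HY]
    [SecondCountableTopology HY] [MeasurableSpace HY] [BorelSpace HY]
    {H : Type*} [NormedAddCommGroup H] [InnerProductSpace ℝ H] [CompleteSpace H]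
    [SecondCountableTopology H]
    (tmul : HX →ₗ[ℝ] HY →ₗ[ℝ] H)
    (htmul : ∀ (f f' : HX) (g g' : HY),
      ⟪tmul f g, tmul f' g'⟫ = ⟪f, f'⟫ * ⟪g, g'⟫)
    (φX : 𝒳 → HX) (hφX : Measurable φX) (φY : 𝒴 → HY) (hφY : Measurable φY)
    (hIntX : Integrable (fun ω => ‖φX (X ω)‖ ^ 2) P)
    (hIntY : Integrable (fun ω => ‖φY (Y ω)‖ ^ 2) P)
    (f : HX) (g : HY) :
    (fun ω => ⟪tmul f g,
        (P[fun ω' => tmul (φX (X ω')) (φY (Y ω')) | MeasurableSpace.comap Z m𝒵]) ω -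
          tmul ((P[fun ω' => φX (X ω') | MeasurableSpace.comap Z m𝒵]) ω)
            ((P[fun ω' => φY (Y ω') | MeasurableSpace.comap Z m𝒵]) ω)⟫) =ᵐ[P]
      fun ω =>
        (P[fun ω' => ⟪f, φX (X ω')⟫ * ⟪g, φY (Y ω')⟫ | MeasurableSpace.comap Z m𝒵]) ω -
          (P[fun ω' => ⟪f, φX (X ω')⟫ | MeasurableSpace.comap Z m𝒵]) ω *
            (P[fun ω' => ⟪g, φY (Y ω')⟫ | MeasurableSpace.comap Z m𝒵]) ω := by
  have hm : MeasurableSpace.comap Z m𝒵 ≤ mΩ := hZ.comap_le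
  -- norm identity for the tensor map
  have hnorm : ∀ (a : HX) (b : HY), ‖tmul a b‖ = ‖a‖ * ‖b‖ := by
    intro a b
    have h := htmul a a b b
    rw [real_inner_self_eq_norm_sq, real_inner_self_eq_norm_sq,
      real_inner_self_eq_norm_sq] at h
    have h' : ‖tmul a b‖ ^ 2 = (‖a‖ * ‖b‖) ^ 2 := by rw [mul_pow]; exact h
    have := congrArg Real.sqrt h'
    rwa [Real.sqrt_sq (norm_nonneg _),
      Real.sqrt_sq (mul_nonneg (norm_nonneg _) (norm_nonneg _))] at this
  -- measurability
  have hmX : AEStronglyMeasurable (fun ω => φX (X ω)) P :=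
    (hφX.comp hX).aestronglyMeasurable
  have hmY : AEStronglyMeasurable (fun ω => φY (Y ω)) P :=
    (hφY.comp hY).aestronglyMeasurable
  -- tmul as a continuous bilinear map
  let T : HX →L[ℝ] HY →L[ℝ] H :=
    LinearMap.mkContinuous₂ tmul 1 (fun a b => by rw [hnorm, one_mul])
  have hmT : AEStronglyMeasurable (fun ω => tmul (φX (X ω)) (φY (Y ω))) P := by
    have : Continuous fun p : HX × HY => T p.1 p.2 := T.continuous₂
    exact (this.comp_aestronglyMeasurable (hmX.prodMk hmY))
  -- integrability
  have intX : Integrable (fun ω => φX (X ω)) P :=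
    ((memLp_two_iff_integrable_sq_norm hmX).mpr hIntX).integrable one_le_two
  have intY : Integrable (fun ω => φY (Y ω)) P :=
    ((memLp_two_iff_integrable_sq_norm hmY).mpr hIntY).integrable one_le_two
  have intT : Integrable (fun ω => tmul (φX (X ω)) (φY (Y ω))) P := by
    refine Integrable.mono' ((hIntX.add hIntY).div_const 2) hmT ?_
    filter_upwards with ω
    rw [hnorm]
    have := two_mul_le_add_sq ‖φX (X ω)‖ ‖φY (Y ω)‖
    simp only [Pi.add_apply, Pi.div_apply]
    nlinarith [norm_nonneg (φX (X ω)), norm_nonneg (φY (Y ω))]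
  -- conditional expectation commutes with the relevant inner-product functionals
  have h1 := condexp_clm_comm hm P (innerSL ℝ (tmul f g)) intT
  have h2 := condexp_clm_comm hm P (innerSL ℝ f) intX
  have h3 := condexp_clm_comm hm P (innerSL ℝ g) intY
  simp only [innerSL_apply_apply] at h1 h2 h3
  have hrw : (fun ω => ⟪tmul f g, tmul (φX (X ω)) (φY (Y ω))⟫) =
      fun ω => ⟪f, φX (X ω)⟫ * ⟪g, φY (Y ω)⟫ := funext fun ω => htmul _ _ _ _
  rw [hrw] at h1
  filter_upwards [h1, h2, h3] with ω e1 e2 e3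
  rw [inner_sub_right, e1, htmul, e2, e3]
end

section
/- For every measurable G : 𝒵 → H with ∫_𝒵 ‖G(z)‖² dP_Z(z) < ∞, the original loss is bounded by the surrogate loss: 𝓔_{X|Z}(G) := E[‖F_{P_{X|Z}}(Z) − G(Z)‖²_H] ≤ E[‖φ(X) − G(Z)‖²_H] =: 𝓔̃_{X|Z}(G). (Surrogate loss bound of Section 4, proved via the generalised conditional Jensen inequality.) -/
open MeasureTheory
open scoped RealInnerProductSpace

private lemma integral_norm_sq_eq_norm_sq
    {α : Type*} [MeasurableSpace α] {μ : Measure α}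
    {H : Type*} [NormedAddCommGroup H] [InnerProductSpace ℝ H]
    (h : Lp H 2 μ) : ∫ a, ‖h a‖ ^ 2 ∂μ = ‖h‖ ^ 2 := by
  rw [← real_inner_self_eq_norm_sq, L2.inner_def]
  exact integral_congr_ae (Filter.Eventually.of_forall fun a =>
    (real_inner_self_eq_norm_sq _).symm)

/-- (Section 4, surrogate loss bound.) For every measurable `G : 𝒵 → H` with
`∫ ‖G z‖² dP_Z < ∞`, the original loss is bounded by the surrogate loss:
`E[‖F_{P_{X|Z}}(Z) − G(Z)‖²] ≤ E[‖φ(X) − G(Z)‖²]`. -/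
theorem surrogate_loss_bound
    {Ω : Type*} [mΩ : MeasurableSpace Ω] (P : Measure Ω) [IsProbabilityMeasure P]
    {𝒳 : Type*} [MeasurableSpace 𝒳] {𝒵 : Type*} [m𝒵 : MeasurableSpace 𝒵]
    (X : Ω → 𝒳) (Z : Ω → 𝒵) (hX : Measurable X) (hZ : Measurable Z)
    {H : Type*} [NormedAddCommGroup H] [InnerProductSpace ℝ H] [CompleteSpace H]
    [SecondCountableTopology H] [MeasurableSpace H] [BorelSpace H]
    (φ : 𝒳 → H) (hφ : Measurable φ)
    (hInt : Integrable (fun ω => ‖φ (X ω)‖ ^ 2) P)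
    (F : 𝒵 → H) (hF : Measurable F)
    (hFver : P[fun ω => φ (X ω) | MeasurableSpace.comap Z m𝒵] =ᵐ[P] F ∘ Z)
    (G : 𝒵 → H) (hG : Measurable G)
    (hGL2 : Integrable (fun z => ‖G z‖ ^ 2) (P.map Z)) :
    ∫ ω, ‖F (Z ω) - G (Z ω)‖ ^ 2 ∂P ≤ ∫ ω, ‖φ (X ω) - G (Z ω)‖ ^ 2 ∂P := by
  have hm : MeasurableSpace.comap Z m𝒵 ≤ mΩ := hZ.comap_le
  haveI : IsFiniteMeasure (P.trim hm) := isFiniteMeasure_trim hm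
  haveI : SigmaFinite (P.trim hm) := inferInstance
  -- Memℒp statements
  have hφX_meas : Measurable fun ω => φ (X ω) := hφ.comp hX
  have hφX2 : MemLp (fun ω => φ (X ω)) 2 P :=
    (memLp_two_iff_integrable_sq_norm hφX_meas.aestronglyMeasurable).mpr hInt
  have hGZ_int : Integrable (fun ω => ‖G (Z ω)‖ ^ 2) P := by
    exact (integrable_map_measure (hG.norm.pow_const 2).aestronglyMeasurable
      hZ.aemeasurable).mp hGL2
  have hGZ_meas : Measurable fun ω => G (Z ω) := hG.comp hZ
  have hGZ2 : MemLp (fun ω => G (Z ω)) 2 P :=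
    (memLp_two_iff_integrable_sq_norm hGZ_meas.aestronglyMeasurable).mpr hGZ_int
  set f : Lp H 2 P := hφX2.toLp _ with hf_def
  set g : Lp H 2 P := hGZ2.toLp _ with hg_def
  have hf_ae : f =ᵐ[P] fun ω => φ (X ω) := hφX2.coeFn_toLp
  have hg_ae : g =ᵐ[P] fun ω => G (Z ω) := hGZ2.coeFn_toLp
  set p : Lp H 2 P := (condExpL2 H ℝ hm f : Lp H 2 P) with hp_def
  -- G ∘ Z is m-strongly measurable
  have hZ_m : Measurable[MeasurableSpace.comap Z m𝒵] Z := fun s hs => ⟨s, hs, rfl⟩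
  have hGZ_m : StronglyMeasurable[MeasurableSpace.comap Z m𝒵] fun ω => G (Z ω) :=
    (hG.comp hZ_m).stronglyMeasurable
  have hg_meas' : AEStronglyMeasurable[MeasurableSpace.comap Z m𝒵] (g : Ω → H) P :=
    ⟨fun ω => G (Z ω), hGZ_m, hg_ae⟩
  -- the L² conditional expectation coincides a.e. with F ∘ Z
  have hp_eq_condexp : (p : Ω → H) =ᵐ[P] P[fun ω => φ (X ω)|MeasurableSpace.comap Z m𝒵] := by
    refine ae_eq_condExp_of_forall_setIntegral_eq hm (hφX2.integrable one_le_two)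
      (fun s hs hμs => integrableOn_condExpL2_of_measure_ne_top hm hμs.ne f)
      (fun s hs hμs => ?_) (aestronglyMeasurable_condExpL2 hm f)
    rw [integral_condExpL2_eq hm f hs hμs.ne]
    exact setIntegral_congr_ae (hm s hs) (hf_ae.mono fun ω hω _ => hω)
  have hp_ae : (p : Ω → H) =ᵐ[P] fun ω => F (Z ω) := hp_eq_condexp.trans hFver
  -- orthogonality: ⟪f - p, w⟫ = 0 for w ∈ lpMeas
  have hortho : ⟪f - p, p - g⟫ = 0 := by
    have hw_meas : AEStronglyMeasurable[MeasurableSpace.comap Z m𝒵] ((p - g : Lp H 2 P) : Ω → H) P := by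
      refine AEStronglyMeasurable.congr ?_ (Lp.coeFn_sub p g).symm
      exact (aestronglyMeasurable_condExpL2 hm f).sub hg_meas'
    have h1 : ⟪p, p - g⟫ = ⟪f, p - g⟫ :=
      inner_condExpL2_eq_inner_fun hm f (p - g) hw_meas
    rw [inner_sub_left, h1, sub_self]
  -- Pythagoras
  have hnorm : ‖p - g‖ ^ 2 ≤ ‖f - g‖ ^ 2 := by
    have hsplit : f - g = (f - p) + (p - g) := by abel
    rw [hsplit, norm_add_sq_real, hortho]
    nlinarith [sq_nonneg ‖f - p‖, norm_nonneg (f - p), norm_nonneg (p - g)]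
  -- rewrite both sides as L² norms
  have hL : ∫ ω, ‖F (Z ω) - G (Z ω)‖ ^ 2 ∂P = ‖p - g‖ ^ 2 := by
    rw [← integral_norm_sq_eq_norm_sq (p - g)]
    refine integral_congr_ae ?_
    filter_upwards [hp_ae, hg_ae, Lp.coeFn_sub p g] with ω h1 h2 h3
    rw [h3, Pi.sub_apply, h1, h2]
  have hR : ∫ ω, ‖φ (X ω) - G (Z ω)‖ ^ 2 ∂P = ‖f - g‖ ^ 2 := by
    rw [← integral_norm_sq_eq_norm_sq (f - g)]
    refine integral_congr_ae ?_
    filter_upwards [hf_ae, hg_ae, Lp.coeFn_sub f g] with ω h1 h2 h3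
    rw [h3, Pi.sub_apply, h1, h2]
  rw [hL, hR]
  exact hnorm
end

section
/- Generalised conditional Jensen's inequality: f(E[V | 𝓔]) ≤ E[f(V) | 𝓔] P-almost surely. (Theorem B.2 of the appendix, in the Bochner-integrable Banach-space setting in which the paper applies it; a Banach space is a real Hausdorff locally convex space and Bochner integrability implies Pettis integrability.) -/
open MeasureTheory
open scoped RealInnerProductSpace

/-- **Generalised conditional Jensen's inequality** (Theorem B.2, Banach-space
setting): `f(E[V | 𝓔]) ≤ E[f(V) | 𝓔]` `P`-almost surely, for `V` a Bochner
`P`-integrable random variable with values in a separable Banach space and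
`f` a convex, lower semicontinuous real function with `f ∘ V` integrable. -/
theorem generalised_conditional_jensen
    {Ω : Type*} {mF : MeasurableSpace Ω} (P : Measure Ω) [IsProbabilityMeasure P]
    (mE : MeasurableSpace Ω) (hmE : mE ≤ mF)
    {B : Type*} [NormedAddCommGroup B] [NormedSpace ℝ B] [CompleteSpace B]
    [SecondCountableTopology B]
    (V : Ω → B) (hV : Integrable V P)
    (f : B → ℝ) (hconv : ConvexOn ℝ Set.univ f) (hlsc : LowerSemicontinuous f)
    (hfV : Integrable (fun ω => f (V ω)) P) :
    ∀ᵐ ω ∂P, f ((P[V | mE]) ω) ≤ (P[fun ω' => f (V ω') | mE]) ω := by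
  -- `f` is continuous: lsc convex finite on a Banach space, via Baire category.
  have hcont : Continuous f := by
    obtain ⟨n, x₀, hx₀⟩ : ∃ (n : ℕ) (x₀ : B), x₀ ∈ interior {x : B | f x ≤ (n : ℝ)} := by
      have hclosed : ∀ n : ℕ, IsClosed {x : B | f x ≤ (n : ℝ)} := fun n =>
        hlsc.isClosed_preimage n
      have hcover : (⋃ n : ℕ, {x : B | f x ≤ (n : ℝ)}) = Set.univ := by
        ext x
        simpa using exists_nat_ge (f x)
      obtain ⟨n, hn⟩ := nonempty_interior_of_iUnion_of_closed hclosed hcover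
      exact ⟨n, hn⟩
    have hb : (nhds x₀).IsBoundedUnder (· ≤ ·) f := by
      refine ⟨(n : ℝ), Filter.eventually_map.2 ?_⟩
      filter_upwards [mem_interior_iff_mem_nhds.mp hx₀] with x hx
      exact hx
    have htfae := (hconv.continuousOn_tfae isOpen_univ ⟨0, trivial⟩).out 3 1
    exact continuousOn_univ.mp (htfae.mp ⟨x₀, trivial, hb⟩)
  borelize B
  haveI : Nonempty B := ⟨0⟩
  -- Condition via the regular conditional distribution of `V` given `id : (Ω, mF) → (Ω, mE)`.
  have hX : @Measurable Ω Ω mF mE id := fun s hs => hmE s hs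
  have h1 : P[V | mE.comap id] =ᵐ[P]
      fun a => ∫ y, y ∂(ProbabilityTheory.condDistrib V id P (id a)) :=
    ProbabilityTheory.condExp_ae_eq_integral_condDistrib' hX hV
  have h2 : P[fun ω' => f (V ω') | mE.comap id] =ᵐ[P]
      fun a => ∫ y, f y ∂(ProbabilityTheory.condDistrib V id P (id a)) :=
    ProbabilityTheory.condExp_ae_eq_integral_condDistrib hX hV.1.aemeasurable
      hcont.stronglyMeasurable hfV
  rw [MeasurableSpace.comap_id] at h1 h2
  have hint1 : ∀ᵐ a ∂P, Integrable (fun y : B => y)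
      (ProbabilityTheory.condDistrib V id P (id a)) := by
    refine MeasureTheory.Integrable.condDistrib_ae (f := fun p : Ω × B => p.2)
      hX.aemeasurable hV.1.aemeasurable ((integrable_map_measure ?_ ?_).mpr ?_)
    · exact measurable_snd.stronglyMeasurable.aestronglyMeasurable
    · exact hX.aemeasurable.prodMk hV.1.aemeasurable
    · exact hV
  have hint2 : ∀ᵐ a ∂P, Integrable (fun y : B => f y)
      (ProbabilityTheory.condDistrib V id P (id a)) := by
    refine MeasureTheory.Integrable.condDistrib_ae (f := fun p : Ω × B => f p.2)
      hX.aemeasurable hV.1.aemeasurable ((integrable_map_measure ?_ ?_).mpr ?_)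
    · exact (hcont.stronglyMeasurable.comp_measurable measurable_snd).aestronglyMeasurable
    · exact hX.aemeasurable.prodMk hV.1.aemeasurable
    · exact hfV
  filter_upwards [h1, h2, hint1, hint2] with a ha1 ha2 hi1 hi2
  rw [ha1, ha2]
  exact hconv.map_integral_le hcont.continuousOn isClosed_univ
    (Filter.Eventually.of_forall fun _ => trivial) hi1 hi2
end

section
/- For P_Z-almost every z ∈ 𝒵, the feature map φ is Bochner integrable with respect to the regular conditional distribution P_{X|Z=z} and F_{P_{X|Z}}(z) = ∫_𝒳 φ(x) dP_{X|Z=z}(x); i.e. the factorised conditional mean embedding agrees P_Z-almost everywhere with the kernel mean embedding of the regular conditional distribution. (Claim established in the proof of Theorem 5.2, combining Theorems 2.9 and 4.1.) -/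
open MeasureTheory ProbabilityTheory
open scoped RealInnerProductSpace

/-- (Claim from the proof of Theorem 5.2.) For `P_Z`-almost every `z`, the feature map
`φ` is Bochner integrable with respect to the regular conditional distribution
`P_{X|Z=z}` and `F_{P_{X|Z}}(z) = ∫ φ(x) dP_{X|Z=z}(x)`: the factorised conditional
mean embedding agrees `P_Z`-a.e. with the kernel mean embedding of the regular
conditional distribution. -/
theorem conditional_mean_embedding_eq_embedding_of_regular_conditional
    {Ω : Type*} [mΩ : MeasurableSpace Ω] (P : Measure Ω) [IsProbabilityMeasure P]
    {𝒳 : Type*} [MeasurableSpace 𝒳] [StandardBorelSpace 𝒳]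
    {𝒵 : Type*} [m𝒵 : MeasurableSpace 𝒵] [StandardBorelSpace 𝒵]
    (X : Ω → 𝒳) (Z : Ω → 𝒵) (hX : Measurable X) (hZ : Measurable Z)
    {H : Type*} [NormedAddCommGroup H] [InnerProductSpace ℝ H] [CompleteSpace H]
    [SecondCountableTopology H] [MeasurableSpace H] [BorelSpace H]
    (φ : 𝒳 → H) (hφ : Measurable φ)
    (hInt : Integrable (fun ω => φ (X ω)) P)
    (κ : Kernel 𝒵 𝒳) [IsMarkovKernel κ]
    (hκ : P.map (fun ω => (Z ω, X ω)) = (P.map Z) ⊗ₘ κ)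
    (F : 𝒵 → H) (hF : Measurable F)
    (hFver : P[fun ω => φ (X ω) | MeasurableSpace.comap Z m𝒵] =ᵐ[P] F ∘ Z) :
    ∀ᵐ z ∂(P.map Z), Integrable φ (κ z) ∧ F z = ∫ x, φ x ∂(κ z) := by
  haveI : Nonempty Ω := MeasureTheory.Measure.nonempty_of_neZero P
  haveI : Nonempty 𝒳 := Nonempty.map X ‹_›
  have hκeq : ∀ᵐ z ∂(P.map Z), κ z = condDistrib X Z P z :=
    (condDistrib_ae_eq_of_measure_eq_compProd Z hX.aemeasurable hκ).mono fun _ h => h.symm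
  -- integrability of (fun p => φ p.2) w.r.t. the joint law
  have hsm : AEStronglyMeasurable (fun p : 𝒵 × 𝒳 => φ p.2)
      (P.map fun ω => (Z ω, X ω)) :=
    (hφ.comp measurable_snd).aestronglyMeasurable
  have hjoint : Integrable (fun p : 𝒵 × 𝒳 => φ p.2) (P.map fun ω => (Z ω, X ω)) := by
    rw [integrable_map_measure hsm (hZ.aemeasurable.prodMk hX.aemeasurable)]
    exact hInt
  have hIntae : ∀ᵐ z ∂(P.map Z), Integrable φ (condDistrib X Z P z) := by
    simpa using hjoint.condDistrib_ae_map hX.aemeasurable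
  -- conditional expectation identification
  have hce : P[fun ω => φ (X ω) | MeasurableSpace.comap Z m𝒵] =ᵐ[P]
      fun ω => ∫ x, φ x ∂condDistrib X Z P (Z ω) :=
    condExp_ae_eq_integral_condDistrib hZ hX.aemeasurable hφ.stronglyMeasurable hInt
  have hFZ : (fun ω => F (Z ω)) =ᵐ[P] fun ω => ∫ x, φ x ∂condDistrib X Z P (Z ω) :=
    hFver.symm.trans hce
  have hg : StronglyMeasurable fun z => ∫ x, φ x ∂condDistrib X Z P z :=
    MeasureTheory.StronglyMeasurable.integral_kernel_prod_right
      (f := fun _ x => φ x) (hφ.comp measurable_snd).stronglyMeasurable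
  have hFae : ∀ᵐ z ∂(P.map Z), F z = ∫ x, φ x ∂condDistrib X Z P z := by
    rw [MeasureTheory.ae_map_iff hZ.aemeasurable]
    · exact hFZ
    · exact measurableSet_eq_fun hF hg.measurable
  filter_upwards [hκeq, hIntae, hFae] with z h1 h2 h3
  rw [h1]
  exact ⟨h2, h3⟩
end

section
/- Suppose k is characteristic, P_Z and P_{Z'} are mutually absolutely continuous, and regular conditional distributions P_{X|Z=z} and P_{X'|Z'=z} exist. Then the maximum conditional mean discrepancy M(z) := ‖F_{P_{X|Z}}(z) − F_{P_{X'|Z'}}(z)‖_H vanishes for P_Z-almost all z ∈ 𝒵 if and only if, for P_Z-almost all z ∈ 𝒵, P_{X|Z=z}(B) = P_{X'|Z'=z}(B) for all measurable B ⊆ 𝒳. (Theorem 5.2.) -/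
open MeasureTheory ProbabilityTheory
open scoped RealInnerProductSpace

/-- Auxiliary: a measurable version of the conditional expectation of `φ ∘ X` given `Z`
agrees `P.map Z`-a.e. with the kernel mean embedding `z ↦ ∫ x, φ x ∂κ z`, whenever `κ` is a
regular conditional distribution of `X` given `Z`. -/
lemma aux_F_ae_eq_integral_kernel
    {Ω : Type*} [mΩ : MeasurableSpace Ω] (P : Measure Ω) [IsProbabilityMeasure P]
    {𝒳 : Type*} [MeasurableSpace 𝒳] [StandardBorelSpace 𝒳] [Nonempty 𝒳]
    {𝒵 : Type*} [m𝒵 : MeasurableSpace 𝒵] [StandardBorelSpace 𝒵]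
    (X : Ω → 𝒳) (Z : Ω → 𝒵) (hX : Measurable X) (hZ : Measurable Z)
    {H : Type*} [NormedAddCommGroup H] [NormedSpace ℝ H] [CompleteSpace H]
    [SecondCountableTopology H] [MeasurableSpace H] [BorelSpace H]
    (φ : 𝒳 → H) (hφ : Measurable φ)
    (hInt : Integrable (fun ω => φ (X ω)) P)
    (κ : Kernel 𝒵 𝒳) [IsMarkovKernel κ]
    (hκ : P.map (fun ω => (Z ω, X ω)) = (P.map Z) ⊗ₘ κ)
    (F : 𝒵 → H) (hF : Measurable F)
    (hFver : P[fun ω => φ (X ω) | MeasurableSpace.comap Z m𝒵] =ᵐ[P] F ∘ Z) :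
    F =ᵐ[P.map Z] fun z => ∫ x, φ x ∂κ z := by
  have hκae : ∀ᵐ z ∂P.map Z, κ z = condDistrib X Z P z :=
    (condDistrib_ae_eq_of_measure_eq_compProd_of_measurable hZ hX hκ).mono fun z h => h.symm
  have hcond :
      P[fun ω => φ (X ω) | MeasurableSpace.comap Z m𝒵] =ᵐ[P]
        fun ω => ∫ x, φ x ∂condDistrib X Z P (Z ω) :=
    condExp_ae_eq_integral_condDistrib hZ hX.aemeasurable hφ.stronglyMeasurable hInt
  have hZcomp : (F ∘ Z) =ᵐ[P] fun ω => ∫ x, φ x ∂condDistrib X Z P (Z ω) :=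
    hFver.symm.trans hcond
  -- turn the a.e. statement along `Z` into an a.e. statement w.r.t. `P.map Z`
  have hG : Measurable fun z => ∫ x, φ x ∂condDistrib X Z P z := by
    have : StronglyMeasurable fun (p : 𝒵 × 𝒳) => φ p.2 :=
      hφ.stronglyMeasurable.comp_measurable measurable_snd
    exact (this.integral_kernel_prod_right' (κ := condDistrib X Z P)).measurable
  have hFG : F =ᵐ[P.map Z] fun z => ∫ x, φ x ∂condDistrib X Z P z := by
    rw [Filter.EventuallyEq, ae_iff]
    have hs : MeasurableSet {z | ¬ F z = ∫ x, φ x ∂condDistrib X Z P z} :=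
      (measurableSet_eq_fun hF hG).compl
    rw [Measure.map_apply hZ hs]
    simpa [Filter.EventuallyEq, ae_iff, Set.preimage] using hZcomp
  filter_upwards [hFG, hκae] with z h1 h2
  rw [h1, h2]

/-- **Theorem 5.2.** Suppose the kernel (feature map `φ`) is characteristic, `P_Z` and
`P_{Z'}` are mutually absolutely continuous, and `κ, κ'` are regular conditional
distributions of `X` given `Z` and of `X'` given `Z'`. Then the maximum conditional
mean discrepancy `M(z) := ‖F_{P_{X|Z}}(z) − F_{P_{X'|Z'}}(z)‖` vanishes for
`P_Z`-almost all `z` if and only if, for `P_Z`-almost all `z`,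
`P_{X|Z=z}(B) = P_{X'|Z'=z}(B)` for all measurable `B`. -/
theorem mcmd_zero_iff_equal_conditionals
    {Ω : Type*} [mΩ : MeasurableSpace Ω] (P : Measure Ω) [IsProbabilityMeasure P]
    {𝒳 : Type*} [MeasurableSpace 𝒳] [StandardBorelSpace 𝒳]
    {𝒵 : Type*} [m𝒵 : MeasurableSpace 𝒵] [StandardBorelSpace 𝒵]
    (X X' : Ω → 𝒳) (Z Z' : Ω → 𝒵)
    (hX : Measurable X) (hX' : Measurable X') (hZ : Measurable Z) (hZ' : Measurable Z')
    {H : Type*} [NormedAddCommGroup H] [InnerProductSpace ℝ H] [CompleteSpace H]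
    [SecondCountableTopology H] [MeasurableSpace H] [BorelSpace H]
    (φ : 𝒳 → H) (hφ : Measurable φ)
    (hInt : Integrable (fun ω => φ (X ω)) P)
    (hInt' : Integrable (fun ω => φ (X' ω)) P)
    (hchar : ∀ μ ν : Measure 𝒳, IsProbabilityMeasure μ → IsProbabilityMeasure ν →
      Integrable φ μ → Integrable φ ν → (∫ x, φ x ∂μ) = ∫ x, φ x ∂ν → μ = ν)
    (hac : P.map Z ≪ P.map Z') (hac' : P.map Z' ≪ P.map Z)
    (κ κ' : Kernel 𝒵 𝒳) [IsMarkovKernel κ] [IsMarkovKernel κ']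
    (hκ : P.map (fun ω => (Z ω, X ω)) = (P.map Z) ⊗ₘ κ)
    (hκ' : P.map (fun ω => (Z' ω, X' ω)) = (P.map Z') ⊗ₘ κ')
    (F F' : 𝒵 → H) (hF : Measurable F) (hF' : Measurable F')
    (hFver : P[fun ω => φ (X ω) | MeasurableSpace.comap Z m𝒵] =ᵐ[P] F ∘ Z)
    (hFver' : P[fun ω => φ (X' ω) | MeasurableSpace.comap Z' m𝒵] =ᵐ[P] F' ∘ Z') :
    (∀ᵐ z ∂(P.map Z), ‖F z - F' z‖ = 0) ↔
      ∀ᵐ z ∂(P.map Z), ∀ B : Set 𝒳, MeasurableSet B → κ z B = κ' z B := by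
  have hΩ : Nonempty Ω := by
    by_contra hc
    rw [not_nonempty_iff] at hc
    have := measure_univ (μ := P)
    simp [Set.univ_eq_empty_iff.mpr hc] at this
  have : Nonempty 𝒳 := ⟨X (Classical.arbitrary Ω)⟩
  -- representations of F and F' as kernel mean embeddings
  have hFrep : F =ᵐ[P.map Z] fun z => ∫ x, φ x ∂κ z :=
    aux_F_ae_eq_integral_kernel P X Z hX hZ φ hφ hInt κ hκ F hF hFver
  have hFrep' : F' =ᵐ[P.map Z] fun z => ∫ x, φ x ∂κ' z :=
    hac.ae_le (aux_F_ae_eq_integral_kernel P X' Z' hX' hZ' φ hφ hInt' κ' hκ' F' hF' hFver')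
  -- a.e. integrability of φ with respect to the conditional distributions
  have hIntκ : ∀ᵐ z ∂P.map Z, Integrable φ (κ z) := by
    have h1 : Integrable (φ ∘ Prod.snd) ((P.map Z) ⊗ₘ κ) := by
      rw [← hκ]
      rw [integrable_map_measure (hφ.comp measurable_snd).aestronglyMeasurable
        (hZ.prodMk hX).aemeasurable]
      exact hInt
    have := ((Measure.integrable_compProd_iff h1.1).mp h1).1
    simpa [Function.comp] using this
  have hIntκ' : ∀ᵐ z ∂P.map Z, Integrable φ (κ' z) := by
    refine hac.ae_le ?_
    have h1 : Integrable (φ ∘ Prod.snd) ((P.map Z') ⊗ₘ κ') := by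
      rw [← hκ']
      rw [integrable_map_measure (hφ.comp measurable_snd).aestronglyMeasurable
        (hZ'.prodMk hX').aemeasurable]
      exact hInt'
    have := ((Measure.integrable_compProd_iff h1.1).mp h1).1
    have h2 : ∀ᵐ z ∂P.map Z', Integrable φ (κ' z) := by simpa [Function.comp] using this
    exact h2
  constructor
  · intro h
    filter_upwards [h, hFrep, hFrep', hIntκ, hIntκ'] with z hz h1 h2 hi hi' B hB
    have : F z = F' z := by simpa [sub_eq_zero] using norm_eq_zero.mp hz
    have hmeq : κ z = κ' z := by
      refine hchar (κ z) (κ' z) inferInstance inferInstance hi hi' ?_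
      rw [← h1, ← h2, this]
    rw [hmeq]
  · intro h
    filter_upwards [h, hFrep, hFrep'] with z hz h1 h2
    have hmeq : κ z = κ' z := Measure.ext fun s hs => hz s hs
    rw [h1, h2, hmeq, sub_self, norm_zero]
end

section
/- Suppose the product feature ψ(x,y) := φ_X(x) ⊗ φ_Y(y) is characteristic on 𝒳 × 𝒴. Then the Hilbert–Schmidt conditional independence criterion HSCIC(X, Y | Z) := ‖μ_{P_{XY|Z}} − μ_{P_{X|Z}} ⊗ μ_{P_{Y|Z}}‖_H equals 0 P-almost surely if and only if X and Y are conditionally independent given Z. (Theorem 5.4.) -/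
set_option maxHeartbeats 2000000

open MeasureTheory ProbabilityTheory
open scoped RealInnerProductSpace

private lemma countable_generatePiSystem_aux {α : Type*} {S : Set (Set α)} (hS : S.Countable) :
    (generatePiSystem S).Countable := by
  classical
  have := hS.to_subtype
  refine (Set.countable_range (fun F : Finset S => ⋂ s ∈ F, (s : Set α))).mono ?_
  intro t ht
  induction ht with
  | base h => exact ⟨{⟨_, h⟩}, by simp⟩
  | inter hs ht hne ihs iht =>
    obtain ⟨F1, rfl⟩ := ihs
    obtain ⟨F2, rfl⟩ := iht
    refine ⟨F1 ∪ F2, ?_⟩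
    simp only []
    ext x
    simp only [Set.mem_iInter, Finset.mem_union, Set.mem_inter_iff]
    constructor
    · intro h
      exact ⟨fun i hi => h i (Or.inl hi), fun i hi => h i (Or.inr hi)⟩
    · rintro ⟨h1, h2⟩ i (hi | hi)
      exacts [h1 i hi, h2 i hi]

/-- **Theorem 5.4.** Suppose the product feature `ψ(x,y) := φ_X(x) ⊗ φ_Y(y)` is
characteristic on `𝒳 × 𝒴`. Then the Hilbert–Schmidt conditional independence
criterion `HSCIC(X,Y|Z) := ‖μ_{P_{XY|Z}} − μ_{P_{X|Z}} ⊗ μ_{P_{Y|Z}}‖` vanishes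
`P`-almost surely if and only if `X` and `Y` are conditionally independent
given `Z`. -/
theorem hscic_zero_iff_condIndep
    {Ω : Type*} [mΩ : MeasurableSpace Ω] [StandardBorelSpace Ω] [Nonempty Ω]
    (P : Measure Ω) [IsProbabilityMeasure P]
    {𝒳 : Type*} [MeasurableSpace 𝒳] [StandardBorelSpace 𝒳]
    {𝒴 : Type*} [MeasurableSpace 𝒴] [StandardBorelSpace 𝒴]
    {𝒵 : Type*} [m𝒵 : MeasurableSpace 𝒵] [StandardBorelSpace 𝒵]
    (X : Ω → 𝒳) (Y : Ω → 𝒴) (Z : Ω → 𝒵)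
    (hX : Measurable X) (hY : Measurable Y) (hZ : Measurable Z)
    {HX : Type*} [NormedAddCommGroup HX] [InnerProductSpace ℝ HX] [CompleteSpace HX]
    [SecondCountableTopology HX] [MeasurableSpace HX] [BorelSpace HX]
    {HY : Type*} [NormedAddCommGroup HY] [InnerProductSpace ℝ HY] [CompleteSpace HY]
    [SecondCountableTopology HY] [MeasurableSpace HY] [BorelSpace HY]
    {H : Type*} [NormedAddCommGroup H] [InnerProductSpace ℝ H] [CompleteSpace H]
    [SecondCountableTopology H]
    (tmul : HX →ₗ[ℝ] HY →ₗ[ℝ] H)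
    (htmul : ∀ (f f' : HX) (g g' : HY),
      ⟪tmul f g, tmul f' g'⟫ = ⟪f, f'⟫ * ⟪g, g'⟫)
    (φX : 𝒳 → HX) (hφX : Measurable φX) (φY : 𝒴 → HY) (hφY : Measurable φY)
    (hIntX : Integrable (fun ω => ‖φX (X ω)‖ ^ 2) P)
    (hIntY : Integrable (fun ω => ‖φY (Y ω)‖ ^ 2) P)
    (hchar : ∀ μ ν : Measure (𝒳 × 𝒴), IsProbabilityMeasure μ → IsProbabilityMeasure ν →
      Integrable (fun p => tmul (φX p.1) (φY p.2)) μ →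
      Integrable (fun p => tmul (φX p.1) (φY p.2)) ν →
      (∫ p, tmul (φX p.1) (φY p.2) ∂μ) = (∫ p, tmul (φX p.1) (φY p.2) ∂ν) → μ = ν) :
    (fun ω => ‖(P[fun ω' => tmul (φX (X ω')) (φY (Y ω')) | MeasurableSpace.comap Z m𝒵]) ω -
        tmul ((P[fun ω' => φX (X ω') | MeasurableSpace.comap Z m𝒵]) ω)
          ((P[fun ω' => φY (Y ω') | MeasurableSpace.comap Z m𝒵]) ω)‖) =ᵐ[P] 0 ↔
      CondIndepFun (MeasurableSpace.comap Z m𝒵) (hZ.comap_le) X Y P := by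
  have hm' : MeasurableSpace.comap Z m𝒵 ≤ mΩ := hZ.comap_le
  have hnorm : ∀ (f : HX) (g : HY), ‖tmul f g‖ = ‖f‖ * ‖g‖ := by
    intro f g
    have h1 : ‖tmul f g‖ ^ 2 = (‖f‖ * ‖g‖) ^ 2 := by
      rw [← real_inner_self_eq_norm_sq, htmul, real_inner_self_eq_norm_sq,
        real_inner_self_eq_norm_sq]
      ring
    nlinarith [norm_nonneg (tmul f g), norm_nonneg f, norm_nonneg g,
      mul_nonneg (norm_nonneg f) (norm_nonneg g)]
  set T : HX →L[ℝ] HY →L[ℝ] H :=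
    LinearMap.mkContinuous₂ tmul 1 (fun f g => le_of_eq (by rw [hnorm f g]; ring)) with hT
  have hTapp : ∀ f g, T f g = tmul f g := fun f g => rfl
  have hTcont : Continuous fun p : HX × HY => T p.1 p.2 := T.isBoundedBilinearMap.continuous
  have hψsm : StronglyMeasurable fun p : 𝒳 × 𝒴 => tmul (φX p.1) (φY p.2) := by
    have h1 : Measurable fun p : 𝒳 × 𝒴 => (φX p.1, φY p.2) :=
      (hφX.comp measurable_fst).prodMk (hφY.comp measurable_snd)
    have h2 := hTcont.comp_stronglyMeasurable h1.stronglyMeasurable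
    simpa [hTapp] using h2
  -- integrabilities under P
  have hIXP : Integrable (fun ω => φX (X ω)) P := by
    refine Integrable.mono' ((integrable_const (1:ℝ)).add hIntX)
      ((hφX.comp hX).stronglyMeasurable.aestronglyMeasurable) ?_
    filter_upwards with ω
    simp only [Pi.add_apply]
    nlinarith [sq_nonneg (‖φX (X ω)‖ - 1), norm_nonneg (φX (X ω))]
  have hIYP : Integrable (fun ω => φY (Y ω)) P := by
    refine Integrable.mono' ((integrable_const (1:ℝ)).add hIntY)
      ((hφY.comp hY).stronglyMeasurable.aestronglyMeasurable) ?_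
    filter_upwards with ω
    simp only [Pi.add_apply]
    nlinarith [sq_nonneg (‖φY (Y ω)‖ - 1), norm_nonneg (φY (Y ω))]
  have hIψP : Integrable (fun ω => tmul (φX (X ω)) (φY (Y ω))) P := by
    refine Integrable.mono' (hIntX.add hIntY)
      (hψsm.comp_measurable (hX.prodMk hY)).aestronglyMeasurable ?_
    filter_upwards with ω
    simp only [Pi.add_apply]
    rw [hnorm]
    nlinarith [sq_nonneg (‖φX (X ω)‖ - ‖φY (Y ω)‖), norm_nonneg (φX (X ω)),
      norm_nonneg (φY (Y ω))]
  -- key computation for a measure ν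
  have key : ∀ (ν : Measure Ω), IsProbabilityMeasure ν →
      Integrable (fun a => φX (X a)) ν → Integrable (fun a => φY (Y a)) ν →
      (Integrable (fun p : 𝒳 × 𝒴 => tmul (φX p.1) (φY p.2)) ((ν.map X).prod (ν.map Y)) ∧
       ∫ p, tmul (φX p.1) (φY p.2) ∂((ν.map X).prod (ν.map Y))
         = tmul (∫ a, φX (X a) ∂ν) (∫ a, φY (Y a) ∂ν)) := by
    intro ν hν hIX hIY
    have hmapX : Integrable φX (ν.map X) := by
      rw [integrable_map_measure hφX.stronglyMeasurable.aestronglyMeasurable hX.aemeasurable]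
      exact hIX
    have hmapY : Integrable φY (ν.map Y) := by
      rw [integrable_map_measure hφY.stronglyMeasurable.aestronglyMeasurable hY.aemeasurable]
      exact hIY
    have hprodInt : Integrable (fun p : 𝒳 × 𝒴 => tmul (φX p.1) (φY p.2))
        ((ν.map X).prod (ν.map Y)) := by
      refine Integrable.mono' (hmapX.norm.mul_prod hmapY.norm) hψsm.aestronglyMeasurable ?_
      filter_upwards with p
      rw [hnorm]
    refine ⟨hprodInt, ?_⟩
    rw [MeasureTheory.integral_prod _ hprodInt]
    have hiY : ∫ y, φY y ∂(ν.map Y) = ∫ a, φY (Y a) ∂ν :=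
      integral_map hY.aemeasurable hφY.stronglyMeasurable.aestronglyMeasurable
    have hiX : ∫ x, φX x ∂(ν.map X) = ∫ a, φX (X a) ∂ν :=
      integral_map hX.aemeasurable hφX.stronglyMeasurable.aestronglyMeasurable
    have hinner : ∀ x : 𝒳, ∫ y, tmul (φX x) (φY y) ∂(ν.map Y)
        = tmul (φX x) (∫ a, φY (Y a) ∂ν) := by
      intro x
      rw [← hiY, ← hTapp]
      exact ContinuousLinearMap.integral_comp_comm (T (φX x)) hmapY
    simp only [hinner]
    rw [← hiX, ← hTapp]
    exact ContinuousLinearMap.integral_comp_comm (T.flip (∫ a, φY (Y a) ∂ν)) hmapX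
  have keyD : ∀ ν : Measure Ω,
      ∫ p, tmul (φX p.1) (φY p.2) ∂(ν.map (fun a => (X a, Y a)))
        = ∫ a, tmul (φX (X a)) (φY (Y a)) ∂ν := fun ν =>
    integral_map (hX.prodMk hY).aemeasurable hψsm.aestronglyMeasurable
  have keyDInt : ∀ ν : Measure Ω, Integrable (fun a => tmul (φX (X a)) (φY (Y a))) ν →
      Integrable (fun p : 𝒳 × 𝒴 => tmul (φX p.1) (φY p.2)) (ν.map (fun a => (X a, Y a))) := by
    intro ν hν
    rw [integrable_map_measure hψsm.aestronglyMeasurable (hX.prodMk hY).aemeasurable]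
    exact hν
  -- conditional expectation kernel
  set κ : @Kernel Ω Ω (MeasurableSpace.comap Z m𝒵) mΩ := condExpKernel P (MeasurableSpace.comap Z m𝒵) with hκ
  have h1 := condExp_ae_eq_integral_condExpKernel hm'
    (f := fun ω' => tmul (φX (X ω')) (φY (Y ω'))) hIψP
  have h2 := condExp_ae_eq_integral_condExpKernel hm' (f := fun ω' => φX (X ω')) hIXP
  have h3 := condExp_ae_eq_integral_condExpKernel hm' (f := fun ω' => φY (Y ω')) hIYP
  have h4 := hIψP.condExpKernel_ae (m := (MeasurableSpace.comap Z m𝒵))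
  have h5 := hIXP.condExpKernel_ae (m := (MeasurableSpace.comap Z m𝒵))
  have h6 := hIYP.condExpKernel_ae (m := (MeasurableSpace.comap Z m𝒵))
  have step1 : ((fun ω => ‖(P[fun ω' => tmul (φX (X ω')) (φY (Y ω')) | (MeasurableSpace.comap Z m𝒵)]) ω -
        tmul ((P[fun ω' => φX (X ω') | (MeasurableSpace.comap Z m𝒵)]) ω) ((P[fun ω' => φY (Y ω') | (MeasurableSpace.comap Z m𝒵)]) ω)‖) =ᵐ[P] 0) ↔
      ∀ᵐ ω ∂P, ((κ ω).map (fun a => (X a, Y a))) = ((κ ω).map X).prod ((κ ω).map Y) := by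
    constructor
    · intro h
      filter_upwards [h, h1, h2, h3, h4, h5, h6] with ω hω hω1 hω2 hω3 hω4 hω5 hω6
      simp only [Pi.zero_apply, norm_eq_zero, sub_eq_zero] at hω
      rw [hω1, hω2, hω3] at hω
      haveI : IsProbabilityMeasure ((κ ω).map (fun a => (X a, Y a))) :=
        Measure.isProbabilityMeasure_map (hX.prodMk hY).aemeasurable
      haveI : IsProbabilityMeasure ((κ ω).map X) := Measure.isProbabilityMeasure_map hX.aemeasurable
      haveI : IsProbabilityMeasure ((κ ω).map Y) := Measure.isProbabilityMeasure_map hY.aemeasurable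
      haveI : IsProbabilityMeasure (((κ ω).map X).prod ((κ ω).map Y)) := by infer_instance
      refine hchar _ _ inferInstance inferInstance (keyDInt _ hω4)
        (key (κ ω) inferInstance hω5 hω6).1 ?_
      rw [keyD (κ ω), (key (κ ω) inferInstance hω5 hω6).2, hω]
    · intro h
      filter_upwards [h, h1, h2, h3, h4, h5, h6] with ω hω hω1 hω2 hω3 hω4 hω5 hω6
      simp only [Pi.zero_apply, norm_eq_zero, sub_eq_zero]
      rw [hω1, hω2, hω3, ← (key (κ ω) inferInstance hω5 hω6).2, ← hω, keyD (κ ω)]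
  rw [step1]
  -- step 2
  constructor
  · intro h
    rw [condIndepFun_iff_condExp_inter_preimage_eq_mul hX hY]
    intro s t hs ht
    have e1 := condExpKernel_ae_eq_condExp (μ := P) hm' ((hX hs).inter (hY ht))
    have e2 := condExpKernel_ae_eq_condExp (μ := P) hm' (hX hs)
    have e3 := condExpKernel_ae_eq_condExp (μ := P) hm' (hY ht)
    filter_upwards [h, e1, e2, e3] with ω hω hω1 hω2 hω3
    rw [← hω1, ← hω2, ← hω3]
    have hpre : X ⁻¹' s ∩ Y ⁻¹' t = (fun a => (X a, Y a)) ⁻¹' (s ×ˢ t) :=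
      (Set.mk_preimage_prod X Y (s := s) (t := t)).symm
    rw [hpre, measureReal_def, measureReal_def, measureReal_def, ← Measure.map_apply (hX.prodMk hY) (hs.prod ht), hω, Measure.prod_prod,
      Measure.map_apply hX hs, Measure.map_apply hY ht, ENNReal.toReal_mul]
  · intro h
    rw [condIndepFun_iff_condExp_inter_preimage_eq_mul hX hY] at h
    set SX : Set (Set 𝒳) :=
      insert Set.univ (generatePiSystem (MeasurableSpace.countableGeneratingSet 𝒳)) with hSX
    set SY : Set (Set 𝒴) :=
      insert Set.univ (generatePiSystem (MeasurableSpace.countableGeneratingSet 𝒴)) with hSY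
    have hSXc : SX.Countable :=
      (countable_generatePiSystem_aux
        MeasurableSpace.countable_countableGeneratingSet).insert _
    have hSYc : SY.Countable :=
      (countable_generatePiSystem_aux
        MeasurableSpace.countable_countableGeneratingSet).insert _
    have hSXm : ∀ s ∈ SX, MeasurableSet s := by
      rintro s (rfl | hs)
      · exact MeasurableSet.univ
      · exact generatePiSystem_measurableSet
          (fun u hu => MeasurableSpace.measurableSet_countableGeneratingSet hu) s hs
    have hSYm : ∀ t ∈ SY, MeasurableSet t := by
      rintro t (rfl | ht)
      · exact MeasurableSet.univ
      · exact generatePiSystem_measurableSet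
          (fun u hu => MeasurableSpace.measurableSet_countableGeneratingSet hu) t ht
    have hgenX : MeasurableSpace.generateFrom SX = ‹MeasurableSpace 𝒳› := by
      rw [hSX, MeasurableSpace.generateFrom_insert_univ, generateFrom_generatePiSystem_eq,
        MeasurableSpace.generateFrom_countableGeneratingSet]
    have hgenY : MeasurableSpace.generateFrom SY = ‹MeasurableSpace 𝒴› := by
      rw [hSY, MeasurableSpace.generateFrom_insert_univ, generateFrom_generatePiSystem_eq,
        MeasurableSpace.generateFrom_countableGeneratingSet]
    have hpiX : IsPiSystem SX := (isPiSystem_generatePiSystem _).insert_univ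
    have hpiY : IsPiSystem SY := (isPiSystem_generatePiSystem _).insert_univ
    have hspanX : IsCountablySpanning SX :=
      ⟨fun _ => Set.univ, fun _ => Set.mem_insert _ _, Set.iUnion_const _⟩
    have hspanY : IsCountablySpanning SY :=
      ⟨fun _ => Set.univ, fun _ => Set.mem_insert _ _, Set.iUnion_const _⟩
    have hae : ∀ᵐ ω ∂P, ∀ s ∈ SX, ∀ t ∈ SY,
        (κ ω) (X ⁻¹' s ∩ Y ⁻¹' t) = (κ ω) (X ⁻¹' s) * (κ ω) (Y ⁻¹' t) := by
      rw [ae_ball_iff hSXc]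
      intro s hs
      rw [ae_ball_iff hSYc]
      intro t ht
      have hs' := hSXm s hs
      have ht' := hSYm t ht
      have e1 := condExpKernel_ae_eq_condExp (μ := P) hm' ((hX hs').inter (hY ht'))
      have e2 := condExpKernel_ae_eq_condExp (μ := P) hm' (hX hs')
      have e3 := condExpKernel_ae_eq_condExp (μ := P) hm' (hY ht')
      filter_upwards [h s t hs' ht', e1, e2, e3] with ω hω hω1 hω2 hω3
      have hr : ((κ ω) (X ⁻¹' s ∩ Y ⁻¹' t)).toReal
          = (((κ ω) (X ⁻¹' s)) * ((κ ω) (Y ⁻¹' t))).toReal := by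
        rw [ENNReal.toReal_mul, ← measureReal_def, ← measureReal_def, ← measureReal_def, hω1, hω2, hω3]
        exact hω
      exact (ENNReal.toReal_eq_toReal_iff' (measure_ne_top _ _)
        (ENNReal.mul_ne_top (measure_ne_top _ _) (measure_ne_top _ _))).1 hr
    filter_upwards [hae] with ω hω
    haveI : IsProbabilityMeasure ((κ ω).map (fun a => (X a, Y a))) :=
      Measure.isProbabilityMeasure_map (hX.prodMk hY).aemeasurable
    refine ext_of_generate_finite _ (generateFrom_eq_prod hgenX hgenY hspanX hspanY).symm
      (hpiX.prod hpiY) ?_ ?_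
    · rintro _ ⟨s, hs, t, ht, rfl⟩
      rw [Measure.map_apply (hX.prodMk hY) ((hSXm s hs).prod (hSYm t ht)),
        Set.mk_preimage_prod, Measure.prod_prod, Measure.map_apply hX (hSXm s hs),
        Measure.map_apply hY (hSYm t ht)]
      exact hω s hs t ht
    · haveI : IsProbabilityMeasure ((κ ω).map X) := Measure.isProbabilityMeasure_map hX.aemeasurable
      haveI : IsProbabilityMeasure ((κ ω).map Y) := Measure.isProbabilityMeasure_map hY.aemeasurable
      haveI : IsProbabilityMeasure (((κ ω).map X).prod ((κ ω).map Y)) := by infer_instance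
      simp [measure_univ]
end
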